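/- Let n ≥ 1 and let d, d' be positive divisors of n. The number of quandle endomorphisms f of the dihedral quandle Z_n^dih with f(0) = 0 and f(d mod n) = d' mod n equals d if d divides d', and equals 0 otherwise. -/
import Mathlib


/-- A quandle endomorphism of the dihedral quandle `Z_n^dih`. -/
def IsDihedralEnd (n : ℕ) (f : ZMod n → ZMod n) : Prop :=
  ∀ x y : ZMod n, f (2 * y - x) = 2 * f y - f x

/-- Any dihedral-quandle endomorphism fixing `0` is linear. -/
lemma dihedral_linear {n : ℕ} [NeZero n] {f : ZMod n → ZMod n}
    (hf : IsDihedralEnd n f) (h0 : f 0 = 0) (x : ZMod n) : f x = f 1 * x := by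
  have step : ∀ k : ℕ, f ((k + 1 : ℕ) : ZMod n) = f (k : ZMod n) + f 1 := by
    intro k
    induction k with
    | zero => simp [h0]
    | succ k ih =>
      have h2 := hf (k : ZMod n) ((k + 1 : ℕ) : ZMod n)
      have harg : 2 * ((k + 1 : ℕ) : ZMod n) - (k : ZMod n) = ((k + 1 + 1 : ℕ) : ZMod n) := by
        push_cast; ring
      rw [harg] at h2
      rw [h2, ih]; ring
  have natc : ∀ k : ℕ, f (k : ZMod n) = f 1 * k := by
    intro k
    induction k with
    | zero => simpa using h0
    | succ k ih => rw [step k, ih]; push_cast; ring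
  have h := natc x.val
  rwa [ZMod.natCast_val, ZMod.cast_id] at h

/-- Counting solutions of `a * d = d'` in `ZMod n` when `d ∣ n` and `d ∣ d'`. -/
lemma card_solutions (n d d' : ℕ) (hn : 0 < n) (hd : 0 < d)
    (hdn : d ∣ n) (hdd' : d ∣ d') :
    Nat.card {a : ZMod n // a * (d : ZMod n) = (d' : ZMod n)} = d := by
  have : NeZero n := ⟨hn.ne'⟩
  have : NeZero d := ⟨hd.ne'⟩
  set m := n / d with hm_def
  set e := d' / d with he_def
  set b := e % m with hb_def
  have hmn : d * m = n := Nat.mul_div_cancel' hdn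
  have hm : 0 < m := Nat.div_pos (Nat.le_of_dvd hn hdn) hd
  have hde : d * e = d' := Nat.mul_div_cancel' hdd'
  have hbm : b < m := Nat.mod_lt _ hm
  have hdiv : m * (e / m) + b = e := Nat.div_add_mod e m
  have hkey : d' = (m * (e / m)) * d + b * d := by
    conv_lhs => rw [← hde, ← hdiv]
    ring
  have hmd : (m : ZMod n) * (d : ZMod n) = 0 := by
    rw [← Nat.cast_mul, mul_comm m d, hmn, ZMod.natCast_self]
  have hcast : ((b * d : ℕ) : ZMod n) = (d' : ZMod n) := by
    conv_rhs => rw [hkey]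
    push_cast
    rw [mul_right_comm, hmd, zero_mul, zero_add]
  have hcards : Nat.card {a : ZMod n // a * (d : ZMod n) = (d' : ZMod n)} = Nat.card (ZMod d) := by
    refine Nat.card_congr (Equiv.symm ?_)
    refine Equiv.ofBijective (fun k : ZMod d =>
      ⟨((b + k.val * m : ℕ) : ZMod n), ?_⟩) ⟨?_, ?_⟩
    · push_cast
      rw [add_mul, mul_assoc, ← Nat.cast_mul (m := m), mul_comm m d, hmn,
        ZMod.natCast_self, mul_zero, add_zero, ← Nat.cast_mul, hcast]
    · intro k1 k2 hk
      have hv1 : k1.val < d := ZMod.val_lt k1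
      have hv2 : k2.val < d := ZMod.val_lt k2
      have h1 : b + k1.val * m < n := by nlinarith
      have h2 : b + k2.val * m < n := by nlinarith
      simp only [Subtype.mk.injEq] at hk
      have heq : b + k1.val * m = b + k2.val * m := by
        have := congrArg ZMod.val hk
        rwa [ZMod.val_cast_of_lt h1, ZMod.val_cast_of_lt h2] at this
      have hv : k1.val = k2.val :=
        Nat.eq_of_mul_eq_mul_right hm (by omega : k1.val * m = k2.val * m)
      exact ZMod.val_injective _ hv
    · rintro ⟨a, ha⟩
      have hval : ((a.val : ℕ) : ZMod n) = a := by
        rw [ZMod.natCast_val, ZMod.cast_id]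
      have hmod : a.val * d ≡ b * d [MOD m * d] := by
        rw [mul_comm m d, hmn]
        have : ((a.val * d : ℕ) : ZMod n) = ((b * d : ℕ) : ZMod n) := by
          push_cast
          rw [hval, ha, ← hcast]; push_cast; ring
        exact (ZMod.natCast_eq_natCast_iff _ _ _).mp this
      have hmod2 : a.val ≡ b [MOD m] := Nat.ModEq.mul_right_cancel' hd.ne' hmod
      have hb_eq : a.val % m = b := by
        have := hmod2
        unfold Nat.ModEq at this
        rw [this, Nat.mod_eq_of_lt hbm]
      have hav : a.val < n := ZMod.val_lt a
      set s := a.val / m with hs_def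
      have hsm : m * s + b = a.val := by rw [← hb_eq]; exact Nat.div_add_mod a.val m
      have hsd : s < d := by
        by_contra hcon
        push_neg at hcon
        have h1 : m * d ≤ m * s := Nat.mul_le_mul_left m hcon
        have h2 : m * d = n := by rw [mul_comm]; exact hmn
        omega
      refine ⟨(s : ZMod d), ?_⟩
      have hsv : ((s : ZMod d)).val = s := ZMod.val_cast_of_lt hsd
      apply Subtype.ext
      simp only [hsv]
      rw [show b + s * m = a.val by rw [mul_comm s m]; omega, hval]
  rw [hcards, Nat.card_zmod]

theorem card_end_between_divisor_reps (n : ℕ) (hn : 1 ≤ n) (d d' : ℕ)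
    (hd : 0 < d) (hd' : 0 < d') (hdn : d ∣ n) (hd'n : d' ∣ n) :
    Nat.card {f : ZMod n → ZMod n // IsDihedralEnd n f ∧
        f 0 = 0 ∧ f (d : ZMod n) = (d' : ZMod n)} =
      if d ∣ d' then d else 0 := by
  have : NeZero n := ⟨by omega⟩
  have : NeZero d := ⟨hd.ne'⟩
  have E : {f : ZMod n → ZMod n // IsDihedralEnd n f ∧
      f 0 = 0 ∧ f (d : ZMod n) = (d' : ZMod n)} ≃
      {a : ZMod n // a * (d : ZMod n) = (d' : ZMod n)} :=
    { toFun := fun p => ⟨p.1 1, by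
        rw [← dihedral_linear p.2.1 p.2.2.1]; exact p.2.2.2⟩
      invFun := fun q => ⟨fun x => q.1 * x, by intro x y; ring, by ring,
        by simpa using q.2⟩
      left_inv := by
        rintro ⟨f, hf, h0, hfd⟩
        apply Subtype.ext
        funext x
        exact (dihedral_linear hf h0 x).symm
      right_inv := by
        rintro ⟨a, ha⟩
        apply Subtype.ext
        simp }
  rw [Nat.card_congr E]
  by_cases hdvd : d ∣ d'
  · rw [if_pos hdvd]
    exact card_solutions n d d' (by omega) hd hdn hdvd
  · rw [if_neg hdvd]
    have : IsEmpty {a : ZMod n // a * (d : ZMod n) = (d' : ZMod n)} := by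
      refine ⟨fun q => hdvd ?_⟩
      obtain ⟨a, ha⟩ := q
      have := congrArg (ZMod.castHom hdn (ZMod d)) ha
      rw [map_mul, map_natCast, map_natCast, ZMod.natCast_self, mul_zero] at this
      exact (ZMod.natCast_eq_zero_iff d' d).mp this.symm
    simp [Nat.card_of_isEmpty]
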